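/- Comparison principle: Let f, g : ℝ^d → ℝ ∪ {+∞} be convex lower semicontinuous functions bounded from below. If inf f ≥ inf g and s_f(x) ≥ s_g(x) for every x ∈ ℝ^d, then f ≥ g. -/

import Mathlib

open Filter Topology MeasureTheory Set Metric RealInnerProductSpace
open scoped ENNReal NNReal

noncomputable section

def Proper {d : ℕ} (f : EuclideanSpace ℝ (Fin d) → EReal) : Prop :=
  (∀ x, f x ≠ ⊥) ∧ ∃ x, f x ≠ ⊤

def ConvexFn {d : ℕ} (f : EuclideanSpace ℝ (Fin d) → EReal) : Prop :=
  Convex ℝ {p : EuclideanSpace ℝ (Fin d) × ℝ | f p.1 ≤ (p.2 : EReal)}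

def Subdiff {d : ℕ} (f : EuclideanSpace ℝ (Fin d) → EReal) (x : EuclideanSpace ℝ (Fin d)) :
    Set (EuclideanSpace ℝ (Fin d)) :=
  {v | f x ≠ ⊤ ∧ ∀ y, f x + ((⟪v, y - x⟫ : ℝ) : EReal) ≤ f y}

def slopeFn {d : ℕ} (f : EuclideanSpace ℝ (Fin d) → EReal) (x : EuclideanSpace ℝ (Fin d)) : EReal :=
  sInf ((fun v => (‖v‖ : EReal)) '' Subdiff f x)

def eLiminf {d : ℕ} (φ : ℕ → EuclideanSpace ℝ (Fin d) → EReal)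
    (x : EuclideanSpace ℝ (Fin d)) : EReal :=
  ⨅ (u : ℕ → EuclideanSpace ℝ (Fin d)) (_ : Tendsto u atTop (𝓝 x)),
    Filter.liminf (fun n => φ n (u n)) atTop

def eLimsup {d : ℕ} (φ : ℕ → EuclideanSpace ℝ (Fin d) → EReal)
    (x : EuclideanSpace ℝ (Fin d)) : EReal :=
  ⨅ (u : ℕ → EuclideanSpace ℝ (Fin d)) (_ : Tendsto u atTop (𝓝 x)),
    Filter.limsup (fun n => φ n (u n)) atTop

def EpiConv {d : ℕ} (φ : ℕ → EuclideanSpace ℝ (Fin d) → EReal)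
    (ψ : EuclideanSpace ℝ (Fin d) → EReal) : Prop :=
  ∀ x, eLimsup φ x ≤ ψ x ∧ ψ x ≤ eLiminf φ x

def edom {d : ℕ} (h : EuclideanSpace ℝ (Fin d) → EReal) : Set (EuclideanSpace ℝ (Fin d)) :=
  {x | h x ≠ ⊤}

def rdom {d : ℕ} (h : EuclideanSpace ℝ (Fin d) → EReal) : Set (EuclideanSpace ℝ (Fin d)) :=
  {x | h x ≠ ⊤ ∧ h x ≠ ⊥}

def domSub {d : ℕ} (f : EuclideanSpace ℝ (Fin d) → EReal) : Set (EuclideanSpace ℝ (Fin d)) :=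
  {x | (Subdiff f x).Nonempty}

def erealToENNReal (x : EReal) : ℝ≥0∞ :=
  if x = ⊤ then ⊤ else ENNReal.ofReal x.toReal



/-! ### Auxiliary lemmas for the comparison principle -/

lemma abel_dini_aux {a : ℕ → ℝ} (hnn : ∀ n, 0 ≤ a n) {K : ℝ}
    (hK : ∀ N, ∑ k ∈ Finset.range N, (a k) ^ 2 ≤ K)
    (C : ℝ) {θ : ℝ} (hθ : 0 < θ) :
    ∃ N, a N * (C + ∑ k ∈ Finset.range N, a k) < θ := by
  by_contra hcon
  push_neg at hcon
  set S : ℕ → ℝ := fun N => ∑ k ∈ Finset.range N, a k with hS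
  set T : ℕ → ℝ := fun N => C + S N with hT
  have hTsucc : ∀ N, T (N + 1) = T N + a N := by
    intro N; simp only [hT, hS, Finset.sum_range_succ]; ring
  have hTpos : ∀ N, 0 < T N := by
    intro N
    by_contra hneg
    push_neg at hneg
    have h1 := hcon N
    have h2 : a N * T N ≤ 0 := mul_nonpos_of_nonneg_of_nonpos (hnn N) hneg
    simp only [hT, hS] at h1 h2
    linarith
  have haT : ∀ N, θ / T N ≤ a N := by
    intro N
    rw [div_le_iff₀ (hTpos N)]
    exact hcon N
  have hT1pos : ∀ N, 0 < T (N + 1) := fun N => hTpos (N + 1)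
  have key : ∀ N, θ * (Real.log (T (N + 1)) - Real.log (T N)) ≤ (a N) ^ 2 := by
    intro N
    have hx : 0 < T (N + 1) / T N := div_pos (hT1pos N) (hTpos N)
    have hlog := Real.log_le_sub_one_of_pos hx
    rw [Real.log_div (ne_of_gt (hT1pos N)) (ne_of_gt (hTpos N))] at hlog
    have h2 : Real.log (T (N + 1)) - Real.log (T N) ≤ a N / T N := by
      have he : T (N + 1) / T N - 1 = a N / T N := by
        rw [div_sub_one (ne_of_gt (hTpos N)), hTsucc N]; ring
      linarith [he ▸ hlog]
    calc θ * (Real.log (T (N + 1)) - Real.log (T N)) ≤ θ * (a N / T N) :=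
          mul_le_mul_of_nonneg_left h2 (le_of_lt hθ)
      _ = (θ / T N) * a N := by ring
      _ ≤ a N * a N := mul_le_mul_of_nonneg_right (haT N) (hnn N)
      _ = (a N) ^ 2 := by ring
  have hlogbd : ∀ M, θ * (Real.log (T M) - Real.log (T 0)) ≤ K := by
    intro M
    have h1 : ∑ k ∈ Finset.range M, (Real.log (T (k + 1)) - Real.log (T k))
        = Real.log (T M) - Real.log (T 0) := Finset.sum_range_sub (fun N => Real.log (T N)) M
    have h2 : θ * (Real.log (T M) - Real.log (T 0))
        = ∑ k ∈ Finset.range M, θ * (Real.log (T (k + 1)) - Real.log (T k)) := by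
      rw [← Finset.mul_sum, h1]
    rw [h2]
    exact le_trans (Finset.sum_le_sum fun k _ => key k) (hK M)
  set B := Real.exp (Real.log (T 0) + K / θ) with hB
  have hBpos : 0 < B := Real.exp_pos _
  have hTB : ∀ M, T M ≤ B := by
    intro M
    have h1 := hlogbd M
    have h2 : Real.log (T M) ≤ Real.log (T 0) + K / θ := by
      have h2' : Real.log (T M) - Real.log (T 0) ≤ K / θ := by
        rw [le_div_iff₀ hθ]; linarith
      linarith
    calc T M = Real.exp (Real.log (T M)) := (Real.exp_log (hTpos M)).symm
      _ ≤ B := Real.exp_le_exp.mpr h2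
  have halb : ∀ N, θ / B ≤ a N := fun N =>
    le_trans (div_le_div_of_nonneg_left (le_of_lt hθ) (hTpos N) (hTB N)) (haT N)
  obtain ⟨M, hM⟩ := exists_nat_gt (K / (θ / B) ^ 2)
  have h1 : (M : ℝ) * (θ / B) ^ 2 ≤ ∑ k ∈ Finset.range M, (a k) ^ 2 := by
    calc (M : ℝ) * (θ / B) ^ 2 = ∑ _k ∈ Finset.range M, (θ / B) ^ 2 := by
          rw [Finset.sum_const, Finset.card_range, nsmul_eq_mul]
      _ ≤ _ := Finset.sum_le_sum fun k _ => by
          have := halb k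
          have h0 : 0 < θ / B := div_pos hθ hBpos
          nlinarith
  have h2 := hK M
  have h0 : 0 < (θ / B) ^ 2 := by positivity
  rw [div_lt_iff₀ h0] at hM
  linarith

section CPAux

variable {d : ℕ}

local notation "E" => EuclideanSpace ℝ (Fin d)

lemma cp_ne_bot_of_lb {f : E → EReal} {m : ℝ} (h : ∀ x, (m : EReal) ≤ f x) (x : E) : f x ≠ ⊥ :=
  fun hb => absurd (hb ▸ h x) (by simp)

lemma cp_real_of_add_le {u v : EReal} {A B r : ℝ} (hu : u = (A : EReal)) (hv : v = (B : EReal))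
    (h : u + (r : EReal) ≤ v) : A + r ≤ B := by
  rw [hu, hv, ← EReal.coe_add, EReal.coe_le_coe_iff] at h; exact h

lemma cp_cvx_ineq {f : E → EReal} (hcf : ConvexFn f) {a b : E} {fa fb : ℝ}
    (ha : f a ≤ (fa : EReal)) (hb : f b ≤ (fb : EReal)) {t : ℝ} (ht0 : 0 ≤ t) (ht1 : t ≤ 1) :
    f (t • a + (1 - t) • b) ≤ ((t * fa + (1 - t) * fb : ℝ) : EReal) := by
  have h2 : (1 : ℝ) - t ≥ 0 := by linarith
  have := hcf (x := (a, fa)) (y := (b, fb)) ha hb ht0 h2 (by ring)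
  simpa [Prod.smul_mk, smul_eq_mul] using this

lemma cp_exists_subgrad_norm_lt {g : E → EReal} {z : E} {B η : ℝ} (hη : 0 < η)
    (h : slopeFn g z ≤ (B : EReal)) : ∃ w ∈ Subdiff g z, ‖w‖ < B + η := by
  have hlt : slopeFn g z < ((B + η : ℝ) : EReal) :=
    lt_of_le_of_lt h (by exact_mod_cast lt_add_of_pos_right _ hη)
  rw [slopeFn, sInf_lt_iff] at hlt
  obtain ⟨nv, ⟨w, hw, rfl⟩, hlt⟩ := hlt
  exact ⟨w, hw, by simpa using (EReal.coe_lt_coe_iff.mp hlt)⟩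

lemma cp_slope_le_of_mem {f : E → EReal} {z v : E} (hv : v ∈ Subdiff f z) :
    slopeFn f z ≤ (‖v‖ : EReal) := sInf_le ⟨v, hv, rfl⟩

lemma cp_subdiff_mono {f : E → EReal} {m : ℝ} (hm : ∀ x, (m : EReal) ≤ f x)
    {a b va vb : E} (hva : va ∈ Subdiff f a) (hvb : vb ∈ Subdiff f b) :
    ⟪vb - va, b - a⟫ ≥ 0 := by
  obtain ⟨hat, hva2⟩ := hva
  obtain ⟨hbt, hvb2⟩ := hvb
  have hab : f a = ((f a).toReal : EReal) := (EReal.coe_toReal hat (cp_ne_bot_of_lb hm a)).symm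
  have hbb : f b = ((f b).toReal : EReal) := (EReal.coe_toReal hbt (cp_ne_bot_of_lb hm b)).symm
  have h1 := hva2 b
  have h2 := hvb2 a
  rw [hab, hbb, ← EReal.coe_add, EReal.coe_le_coe_iff] at h1 h2
  have e1 : ⟪vb - va, b - a⟫ = (-⟪vb, a - b⟫) - ⟪va, b - a⟫ := by
    rw [inner_sub_left]
    have : (a - b : E) = -(b - a) := by abel
    rw [this, inner_neg_right]
    ring
  rw [e1]; linarith

lemma cp_exists_prox {f : E → EReal} (hlf : LowerSemicontinuous f) {m : ℝ}
    (hm : ∀ x, (m : EReal) ≤ f x)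
    {c : ℝ} (hc : 0 < c) (x₀ : E) (h0 : f x₀ ≠ ⊤) :
    ∃ p : E, ∀ y, f p + ((c * ‖p - x₀‖ ^ 2 : ℝ) : EReal) ≤ f y + ((c * ‖y - x₀‖ ^ 2 : ℝ) : EReal) := by
  set φ : E → EReal := fun y => f y + ((c * ‖y - x₀‖ ^ 2 : ℝ) : EReal) with hφ
  have hnb : ∀ x : E, f x ≠ ⊥ := cp_ne_bot_of_lb hm
  have hqc : Continuous fun y : E => ((c * ‖y - x₀‖ ^ 2 : ℝ) : EReal) := by
    apply Continuous.comp continuous_coe_real_ereal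
    continuity
  have hφlsc : LowerSemicontinuous φ := by
    apply hlf.add' hqc.lowerSemicontinuous
    intro x
    exact EReal.continuousAt_add (Or.inr (EReal.coe_ne_bot _)) (Or.inl (hnb x))
  have hφlb : ∀ y, ((m + c * ‖y - x₀‖ ^ 2 : ℝ) : EReal) ≤ φ y := by
    intro y
    rw [hφ, EReal.coe_add]
    exact add_le_add_left (hm y) _
  set A := ⨅ y, φ y with hA
  have hAle : A ≤ f x₀ := by
    have : φ x₀ = f x₀ := by simp [hφ]
    exact this ▸ iInf_le φ x₀
  have hAtop : A ≠ ⊤ := fun h => h0 (top_le_iff.mp (h ▸ hAle))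
  have hAbot : A ≠ ⊥ := by
    intro h
    have : ((m : ℝ) : EReal) ≤ A := le_iInf fun y => le_trans
      (by exact_mod_cast by nlinarith [sq_nonneg ‖y - x₀‖] :
        ((m : ℝ) : EReal) ≤ ((m + c * ‖y - x₀‖ ^ 2 : ℝ) : EReal)) (hφlb y)
    rw [h] at this; exact absurd this (by simp)
  set Ar := A.toReal with hAr
  have hAcoe : A = (Ar : EReal) := (EReal.coe_toReal hAtop hAbot).symm
  have hseq : ∀ n : ℕ, ∃ y : E, φ y < ((Ar + 1 / (n + 1) : ℝ) : EReal) := by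
    intro n
    rw [← iInf_lt_iff, ← hA, hAcoe]
    exact_mod_cast lt_add_of_pos_right Ar (by positivity)
  choose y hy using hseq
  set R := Real.sqrt ((Ar + 1 - m) / c) with hR
  have hball : ∀ n, y n ∈ Metric.closedBall x₀ R := by
    intro n
    have h1 : ((m + c * ‖y n - x₀‖ ^ 2 : ℝ) : EReal) < ((Ar + 1 / (n + 1) : ℝ) : EReal) :=
      lt_of_le_of_lt (hφlb _) (hy n)
    have h2 : m + c * ‖y n - x₀‖ ^ 2 < Ar + 1 / (n + 1) := by exact_mod_cast h1
    have h3 : 1 / ((n : ℝ) + 1) ≤ 1 := by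
      rw [div_le_one (by positivity)]; linarith [Nat.cast_nonneg (α := ℝ) n]
    have h4 : ‖y n - x₀‖ ^ 2 ≤ (Ar + 1 - m) / c := by
      rw [le_div_iff₀ hc]; nlinarith
    have h5 : ‖y n - x₀‖ ≤ R := by
      rw [hR]
      exact Real.le_sqrt_of_sq_le h4
    simpa [Metric.mem_closedBall, dist_eq_norm] using h5
  obtain ⟨p, _, ψ, hψmono, hψtend⟩ :=
    tendsto_subseq_of_bounded (Metric.isBounded_closedBall (x := x₀) (r := R)) hball
  refine ⟨p, fun z => ?_⟩
  have hmin : φ p ≤ A := by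
    by_contra hcon
    push_neg at hcon
    obtain ⟨b, hb1, hb2⟩ := EReal.exists_between_coe_real (hAcoe ▸ hcon : A < φ p)
    have hev : ∀ᶠ n in Filter.atTop, (b : EReal) < φ (y (ψ n)) :=
      hψtend.eventually (hφlsc p b hb2)
    have hArb : Ar < b := by exact_mod_cast hAcoe ▸ hb1
    obtain ⟨n₀, hn₀⟩ : ∃ n₀ : ℕ, Ar + 1 / ((n₀ : ℝ) + 1) < b := by
      obtain ⟨k, hk⟩ := exists_nat_gt (1 / (b - Ar))
      refine ⟨k, ?_⟩
      have hba : 0 < b - Ar := by linarith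
      have : 1 / ((k : ℝ) + 1) < b - Ar := by
        rw [div_lt_iff₀ (by positivity)]
        rw [div_lt_iff₀ hba] at hk
        nlinarith [Nat.cast_nonneg (α := ℝ) k]
      linarith
    obtain ⟨n, hn, hbn⟩ := (hev.and (Filter.eventually_ge_atTop n₀)).exists
    have hlt : φ (y (ψ n)) < (b : EReal) := by
      refine lt_of_lt_of_le (hy (ψ n)) ?_
      rw [EReal.coe_le_coe_iff]
      have : (n₀ : ℝ) ≤ (ψ n : ℝ) := by exact_mod_cast le_trans hbn (hψmono.le_apply)
      have h6 : 1 / ((ψ n : ℝ) + 1) ≤ 1 / ((n₀ : ℝ) + 1) := by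
        apply one_div_le_one_div_of_le (by positivity); linarith
      linarith
    exact absurd (lt_trans hn hlt) (lt_irrefl _)
  exact le_trans hmin (iInf_le φ z)

lemma cp_prox_subgrad {f : E → EReal} (hcf : ConvexFn f) {m : ℝ}
    (hm : ∀ x, (m : EReal) ≤ f x) {c : ℝ} (hc : 0 < c) {x₀ p : E} (h0 : f x₀ ≠ ⊤)
    (hmin : ∀ y, f p + ((c * ‖p - x₀‖ ^ 2 : ℝ) : EReal) ≤ f y + ((c * ‖y - x₀‖ ^ 2 : ℝ) : EReal)) :
    ((2 * c) • (x₀ - p)) ∈ Subdiff f p := by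
  have hnb : ∀ x : E, f x ≠ ⊥ := cp_ne_bot_of_lb hm
  have hpt : f p ≠ ⊤ := by
    intro h
    have this1 := hmin x₀
    rw [h, EReal.top_add_of_ne_bot (EReal.coe_ne_bot _), top_le_iff] at this1
    have hx0 : f x₀ = (((f x₀).toReal : ℝ) : EReal) := (EReal.coe_toReal h0 (hnb x₀)).symm
    rw [hx0, ← EReal.coe_add] at this1
    exact EReal.coe_ne_top _ this1
  have hFp : f p = (((f p).toReal : ℝ) : EReal) := (EReal.coe_toReal hpt (hnb p)).symm
  set Fp := (f p).toReal with hFpdef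
  refine ⟨hpt, fun y => ?_⟩
  by_cases hyt : f y = ⊤
  · rw [hyt]; exact le_top
  have hFy : f y = (((f y).toReal : ℝ) : EReal) := (EReal.coe_toReal hyt (hnb y)).symm
  set Fy := (f y).toReal with hFydef
  have key : ∀ t : ℝ, 0 < t → t ≤ 1 →
      Fp + 2 * c * ⟪x₀ - p, y - p⟫ ≤ Fy + t * (c * ‖y - p‖ ^ 2) := by
    intro t ht0 ht1
    have hyt' := cp_cvx_ineq hcf (le_of_eq hFy : f y ≤ ((Fy : ℝ) : EReal))
      (le_of_eq hFp : f p ≤ ((Fp : ℝ) : EReal)) (le_of_lt ht0) ht1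
    have hm2 := le_trans (hmin (t • y + (1 - t) • p))
      (add_le_add_left hyt' _)
    have hexp : ‖(t • y + (1 - t) • p) - x₀‖ ^ 2
        = ‖p - x₀‖ ^ 2 + 2 * (t * ⟪p - x₀, y - p⟫) + t ^ 2 * ‖y - p‖ ^ 2 := by
      have e1 : (t • y + (1 - t) • p) - x₀ = (p - x₀) + t • (y - p) := by
        rw [sub_smul, one_smul, smul_sub]
        abel
      rw [e1, norm_add_sq_real, real_inner_smul_right, norm_smul]
      simp [abs_of_pos ht0]
      ring
    rw [hFp, ← EReal.coe_add, ← EReal.coe_add, EReal.coe_le_coe_iff, hexp] at hm2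
    have hip : ⟪x₀ - p, y - p⟫ = -⟪p - x₀, y - p⟫ := by
      have : (x₀ - p : E) = -(p - x₀) := by abel
      rw [this, inner_neg_left]
    rw [hip]
    nlinarith [hm2]
  have key2 : Fp + 2 * c * ⟪x₀ - p, y - p⟫ ≤ Fy := by
    refine le_of_forall_pos_le_add fun ε hε => ?_
    set t := min 1 (ε / (c * ‖y - p‖ ^ 2 + 1)) with htd
    have hd : (0 : ℝ) < c * ‖y - p‖ ^ 2 + 1 := by positivity
    have ht0 : 0 < t := lt_min one_pos (by positivity)
    have ht1 : t ≤ 1 := min_le_left _ _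
    have := key t ht0 ht1
    have hb : t * (c * ‖y - p‖ ^ 2) ≤ ε := by
      have h1 : t ≤ ε / (c * ‖y - p‖ ^ 2 + 1) := min_le_right _ _
      have h2 : 0 ≤ c * ‖y - p‖ ^ 2 := by positivity
      calc t * (c * ‖y - p‖ ^ 2) ≤ (ε / (c * ‖y - p‖ ^ 2 + 1)) * (c * ‖y - p‖ ^ 2) := by
            apply mul_le_mul_of_nonneg_right h1 h2
        _ ≤ ε := by rw [div_mul_eq_mul_div, div_le_iff₀ hd]; nlinarith
    linarith
  have hinner : ⟪(2 * c) • (x₀ - p), y - p⟫ = 2 * c * ⟪x₀ - p, y - p⟫ :=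
    real_inner_smul_left _ _ _
  rw [hFp, hFy, hinner, ← EReal.coe_add, EReal.coe_le_coe_iff]
  exact key2

lemma cp_exists_seq {f : E → EReal} (hlf : LowerSemicontinuous f) {m : ℝ}
    (hm : ∀ x, (m : EReal) ≤ f x) {c : ℝ} (hc : 0 < c) (x₀ : E) (h0 : f x₀ ≠ ⊤) :
    ∃ x : ℕ → E, x 0 = x₀ ∧ (∀ k, f (x k) ≠ ⊤) ∧
      ∀ k, ∀ y, f (x (k + 1)) + ((c * ‖x (k + 1) - x k‖ ^ 2 : ℝ) : EReal)
        ≤ f y + ((c * ‖y - x k‖ ^ 2 : ℝ) : EReal) := by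
  have step : ∀ z : E, f z ≠ ⊤ → ∃ p : E, (f p ≠ ⊤) ∧
      ∀ y, f p + ((c * ‖p - z‖ ^ 2 : ℝ) : EReal) ≤ f y + ((c * ‖y - z‖ ^ 2 : ℝ) : EReal) := by
    intro z hz
    obtain ⟨p, hp⟩ := cp_exists_prox hlf hm hc z hz
    refine ⟨p, ?_, hp⟩
    intro htop
    have this1 := hp z
    rw [htop, EReal.top_add_of_ne_bot (EReal.coe_ne_bot _), top_le_iff] at this1
    have hz' : f z = (((f z).toReal : ℝ) : EReal) := (EReal.coe_toReal hz (cp_ne_bot_of_lb hm z)).symm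
    rw [hz', ← EReal.coe_add] at this1
    exact EReal.coe_ne_top _ this1
  choose pfun hptop hpmin using step
  let s : ℕ → {z : E // f z ≠ ⊤} := fun n =>
    Nat.rec ⟨x₀, h0⟩ (fun _ z => ⟨pfun z.1 z.2, hptop z.1 z.2⟩) n
  exact ⟨fun n => (s n).1, rfl, fun k => (s k).2, fun k => hpmin (s k).1 (s k).2⟩

end CPAux

set_option maxHeartbeats 1600000 in
theorem comparison_principle {d : ℕ} (f g : EuclideanSpace ℝ (Fin d) → EReal)
    (hcf : ConvexFn f) (hlf : LowerSemicontinuous f)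
    (hcg : ConvexFn g) (hlg : LowerSemicontinuous g)
    (hbf : ∃ m : ℝ, ∀ x, (m : EReal) ≤ f x)
    (hbg : ∃ m : ℝ, ∀ x, (m : EReal) ≤ g x)
    (hinf : (⨅ x, g x) ≤ ⨅ x, f x)
    (hslopes : ∀ x, slopeFn g x ≤ slopeFn f x) :
    ∀ x, g x ≤ f x := by
  obtain ⟨mf, hmf⟩ := hbf
  obtain ⟨mg, hmg⟩ := hbg
  have hnbf : ∀ x, f x ≠ ⊥ := cp_ne_bot_of_lb hmf
  have hnbg : ∀ x, g x ≠ ⊥ := cp_ne_bot_of_lb hmg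
  intro x₀
  by_cases h0 : f x₀ = ⊤
  · rw [h0]; exact le_top
  set F₀ := (f x₀).toReal with hF₀def
  have hfx₀ : f x₀ = (F₀ : EReal) := (EReal.coe_toReal h0 (hnbf x₀)).symm
  have hmfF : mf ≤ F₀ := by
    have := hmf x₀; rw [hfx₀] at this; exact_mod_cast this
  -- Key quantitative claim via the proximal point method
  have key : ∀ c : ℝ, 0 < c → ∃ x₁ : EuclideanSpace ℝ (Fin d),
      c * ‖x₁ - x₀‖ ^ 2 ≤ F₀ - mf ∧ g x₁ ≤ (F₀ : EReal) := by
    intro c hcpos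
    have h2c : (0 : ℝ) < 2 * c := by linarith
    obtain ⟨x, hx0, hxtop, hxmin⟩ := cp_exists_seq hlf hmf hcpos x₀ h0
    set s : ℕ → ℝ := fun k => ‖x (k + 1) - x k‖ with hsdef
    have hs : ∀ k, s k = ‖x (k + 1) - x k‖ := fun k => rfl
    set F : ℕ → ℝ := fun k => (f (x k)).toReal with hFdef
    have hFcoe : ∀ k, f (x k) = ((F k : ℝ) : EReal) :=
      fun k => (EReal.coe_toReal (hxtop k) (hnbf _)).symm
    have hF0 : F 0 = F₀ := by show (f (x 0)).toReal = F₀; rw [hx0, hF₀def]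
    have hsnn : ∀ k, 0 ≤ s k := fun k => norm_nonneg _
    have hv : ∀ k, ((2 * c) • (x k - x (k + 1))) ∈ Subdiff f (x (k + 1)) :=
      fun k => cp_prox_subgrad hcf hmf hcpos (hxtop k) (hxmin k)
    have hvnorm : ∀ k, ‖(2 * c) • (x k - x (k + 1))‖ = 2 * c * s k := by
      intro k
      rw [norm_smul, Real.norm_eq_abs, abs_of_pos h2c, norm_sub_rev, ← hs k]
    -- sufficient decrease
    have hdec : ∀ k, F (k + 1) + 2 * c * (s k) ^ 2 ≤ F k := by
      intro k
      have h1 := (hv k).2 (x k)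
      have h3 : F (k + 1) + ⟪((2 * c) • (x k - x (k + 1)) : EuclideanSpace ℝ (Fin d)),
          x k - x (k + 1)⟫ ≤ F k := cp_real_of_add_le (hFcoe (k + 1)) (hFcoe k) h1
      have h2 : ⟪((2 * c) • (x k - x (k + 1)) : EuclideanSpace ℝ (Fin d)), x k - x (k + 1)⟫
          = 2 * c * (s k) ^ 2 := by
        rw [real_inner_smul_left, real_inner_self_eq_norm_sq, norm_sub_rev, ← hs k]
      rw [h2] at h3
      exact h3
    -- monotone step sizes
    have hmono : ∀ k, s (k + 1) ≤ s k := by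
      intro k
      have h : (0 : ℝ) ≤ ⟪((2 * c) • (x (k + 1) - x (k + 2)) : EuclideanSpace ℝ (Fin d))
          - (2 * c) • (x k - x (k + 1)), x (k + 2) - x (k + 1)⟫ := by
        have h0' : ((2 * c) • (x (k + 1) - x (k + 2))) ∈ Subdiff f (x (k + 2)) := hv (k + 1)
        exact cp_subdiff_mono hmf (hv k) h0'
      have e1 : (x (k + 1) : EuclideanSpace ℝ (Fin d)) - x (k + 2) = -(x (k + 2) - x (k + 1)) := by
        abel
      rw [e1, smul_neg, inner_sub_left, inner_neg_left, real_inner_smul_left,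
        real_inner_smul_left, real_inner_self_eq_norm_sq] at h
      have hcs := abs_le.mp (abs_real_inner_le_norm (x k - x (k + 1)) (x (k + 2) - x (k + 1)))
      have hsA : s (k + 1) = ‖x (k + 2) - x (k + 1)‖ := by
        have : s (k + 1) = ‖x (k + 2) - x (k + 1)‖ := hs (k + 1)
        exact this
      have hsB : s k = ‖x k - x (k + 1)‖ := by rw [hs k]; exact norm_sub_rev _ _
      have hI : ⟪(x k - x (k + 1) : EuclideanSpace ℝ (Fin d)), x (k + 2) - x (k + 1)⟫
          ≤ -(‖x (k + 2) - x (k + 1)‖ ^ 2) := by nlinarith [h, h2c]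
      rw [hsA, hsB]
      by_contra hcon
      push_neg at hcon
      nlinarith [hI, hcs.1, hcon, norm_nonneg (x k - x (k + 1))]
    have hmono' : Antitone s := antitone_nat_of_succ_le hmono
    have hFlb : ∀ k, mf ≤ F k := by
      intro k
      have := hmf (x k); rw [hFcoe k] at this; exact_mod_cast this
    -- sum of squares bound
    have hsumsq : ∀ N, ∑ k ∈ Finset.range N, (s k) ^ 2 ≤ (F 0 - mf) / (2 * c) := by
      intro N
      rw [le_div_iff₀ h2c]
      have htel : ∑ k ∈ Finset.range N, (F k - F (k + 1)) = F 0 - F N :=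
        Finset.sum_range_sub' F N
      have h1 : ∑ k ∈ Finset.range N, (s k) ^ 2 * (2 * c)
          ≤ ∑ k ∈ Finset.range N, (F k - F (k + 1)) :=
        Finset.sum_le_sum fun k _ => by nlinarith [hdec k]
      calc (∑ k ∈ Finset.range N, (s k) ^ 2) * (2 * c)
          = ∑ k ∈ Finset.range N, (s k) ^ 2 * (2 * c) := by rw [Finset.sum_mul]
        _ ≤ F 0 - F N := htel ▸ h1
        _ ≤ F 0 - mf := by linarith [hFlb N]
    -- slopes of g along the sequence
    have hslope_g : ∀ k, slopeFn g (x (k + 1)) ≤ ((2 * c * s k : ℝ) : EReal) := by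
      intro k
      refine le_trans (hslopes _) ?_
      rw [← hvnorm k]
      exact cp_slope_le_of_mem (hv k)
    -- g is finite at x 1
    obtain ⟨w0, hw0, _⟩ := cp_exists_subgrad_norm_lt one_pos (hslope_g 0)
    have hgx1top : g (x 1) ≠ ⊤ := hw0.1
    set G : ℕ → ℝ := fun k => (g (x k)).toReal with hGdef
    have hG1coe : g (x 1) = ((G 1 : ℝ) : EReal) :=
      (EReal.coe_toReal hgx1top (hnbg _)).symm
    -- infimum of g is finite
    have hIg_bot : ((mg : ℝ) : EReal) ≤ ⨅ z, g z := le_iInf fun z => hmg z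
    have hIg_top : (⨅ z, g z) ≠ ⊤ := by
      intro h
      have h1 : (⨅ z, g z) ≤ g (x 1) := iInf_le g (x 1)
      rw [h, top_le_iff] at h1
      exact hgx1top h1
    have hIg_bot' : (⨅ z, g z) ≠ ⊥ := fun h => absurd (h ▸ hIg_bot) (by simp)
    set μ := (⨅ z, g z).toReal with hμdef
    have hμcoe : (⨅ z, g z) = (μ : EReal) := (EReal.coe_toReal hIg_top hIg_bot').symm
    have hμF : ∀ k, μ ≤ F k := by
      intro k
      have h1 : (⨅ z, g z) ≤ f (x k) := le_trans hinf (iInf_le f (x k))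
      rw [hμcoe, hFcoe k, EReal.coe_le_coe_iff] at h1
      exact h1
    -- main estimate : G 1 ≤ F 0
    have main : G 1 ≤ F 0 := by
      refine le_of_forall_pos_le_add fun ε' hε' => ?_
      set ε := ε' / (3 + s 0) with hεdef
      have hεpos : 0 < ε := by
        apply div_pos hε'
        linarith [hsnn 0]
      -- choose a near-minimizer of g
      have hyex : ∃ ys, g ys < ((μ + ε : ℝ) : EReal) := by
        rw [← iInf_lt_iff, hμcoe]
        exact_mod_cast lt_add_of_pos_right μ hεpos
      obtain ⟨ys, hys⟩ := hyex
      have hystop : g ys ≠ ⊤ := by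
        intro h; rw [h] at hys; exact absurd hys (by simp)
      set Gy := (g ys).toReal with hGydef
      have hGycoe : g ys = ((Gy : ℝ) : EReal) := (EReal.coe_toReal hystop (hnbg _)).symm
      have hGyμ : Gy < μ + ε := by
        rw [hGycoe] at hys; exact_mod_cast hys
      have hGyF : ∀ k, Gy ≤ F k + ε := fun k => le_trans (le_of_lt hGyμ) (by linarith [hμF k])
      set D := ‖x 1 - ys‖ with hDdef
      -- choose subgradients of g along the sequence
      have hwex : ∀ k, ∃ w ∈ Subdiff g (x (k + 1)), ‖w‖ < 2 * c * s k + ε * (1 / 2) ^ (k + 1) :=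
        fun k => cp_exists_subgrad_norm_lt (by positivity) (hslope_g k)
      choose w hw hwn using hwex
      have hgtop : ∀ k, g (x (k + 1)) ≠ ⊤ := fun k => (hw k).1
      have hGcoe : ∀ k, g (x (k + 1)) = ((G (k + 1) : ℝ) : EReal) :=
        fun k => (EReal.coe_toReal (hgtop k) (hnbg _)).symm
      -- one-step estimate
      have hstep : ∀ k, G (k + 1) - G (k + 2)
          ≤ (F k - F (k + 1)) + ε * (1 / 2) ^ (k + 1) * s 0 := by
        intro k
        have h1 := (hw k).2 (x (k + 2))
        have h3 : G (k + 1) + ⟪w k, x (k + 2) - x (k + 1)⟫ ≤ G (k + 2) :=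
          cp_real_of_add_le (hGcoe k) (hGcoe (k + 1)) h1
        have h2 : -⟪w k, x (k + 2) - x (k + 1)⟫ ≤ ‖w k‖ * s (k + 1) := by
          have ha := abs_le.mp (abs_real_inner_le_norm (w k) (x (k + 2) - x (k + 1)))
          have hsA : s (k + 1) = ‖x (k + 2) - x (k + 1)‖ := hs (k + 1)
          rw [hsA]
          linarith [ha.1]
        have h4 : ‖w k‖ * s (k + 1) ≤ (2 * c * s k + ε * (1 / 2) ^ (k + 1)) * s (k + 1) :=
          mul_le_mul_of_nonneg_right (le_of_lt (hwn k)) (hsnn (k + 1))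
        have h4' : (2 * c * s k + ε * (1 / 2) ^ (k + 1)) * s (k + 1)
            = 2 * c * s k * s (k + 1) + ε * (1 / 2) ^ (k + 1) * s (k + 1) := by ring
        have h5 : 2 * c * s k * s (k + 1) ≤ 2 * c * (s k) ^ 2 := by
          have h5a : (0 : ℝ) ≤ 2 * c * s k := mul_nonneg (le_of_lt h2c) (hsnn k)
          have h5b := mul_le_mul_of_nonneg_left (hmono k) h5a
          nlinarith [h5b]
        have h6 : ε * (1 / 2) ^ (k + 1) * s (k + 1) ≤ ε * (1 / 2) ^ (k + 1) * s 0 := by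
          have h7 : s (k + 1) ≤ s 0 := hmono' (Nat.zero_le (k + 1))
          have h8 : (0 : ℝ) ≤ ε * (1 / 2) ^ (k + 1) := by positivity
          exact mul_le_mul_of_nonneg_left h7 h8
        have h9 := hdec k
        linarith [h3, h2, h4, h4', h5, h6, h9]
      -- telescoping
      have htele : ∀ N, G 1 - G (N + 1) ≤ (F 0 - F N) + ε * s 0 := by
        intro N
        have h1 : ∑ k ∈ Finset.range N, (G (k + 1) - G (k + 2)) = G 1 - G (N + 1) :=
          Finset.sum_range_sub' (fun k => G (k + 1)) N
        have h2 : ∑ k ∈ Finset.range N, (F k - F (k + 1)) = F 0 - F N :=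
          Finset.sum_range_sub' F N
        have hgeo : ∑ k ∈ Finset.range N, ((1 : ℝ) / 2) ^ (k + 1) ≤ 1 := by
          have hg2 := sum_geometric_two_le N
          have he : ∑ k ∈ Finset.range N, ((1 : ℝ) / 2) ^ (k + 1)
              = (1 / 2) * ∑ k ∈ Finset.range N, ((1 : ℝ) / 2) ^ k := by
            rw [Finset.mul_sum]
            exact Finset.sum_congr rfl fun k _ => by ring
          rw [he]; linarith
        have h3 : ∑ k ∈ Finset.range N, (ε * (1 / 2) ^ (k + 1) * s 0) ≤ ε * s 0 := by
          have he : ∑ k ∈ Finset.range N, (ε * (1 / 2) ^ (k + 1) * s 0)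
              = (ε * s 0) * ∑ k ∈ Finset.range N, ((1 : ℝ) / 2) ^ (k + 1) := by
            rw [Finset.mul_sum]
            exact Finset.sum_congr rfl fun k _ => by ring
          rw [he]
          have h5 : (0 : ℝ) ≤ ε * s 0 := by positivity
          nlinarith [hgeo]
        have h4 : G 1 - G (N + 1)
            ≤ ∑ k ∈ Finset.range N, ((F k - F (k + 1)) + ε * (1 / 2) ^ (k + 1) * s 0) := by
          rw [← h1]
          exact Finset.sum_le_sum fun k _ => hstep k
        rw [Finset.sum_add_distrib, h2] at h4
        linarith
      -- Abel–Dini argument to pick a good index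
      obtain ⟨N, hN⟩ := abel_dini_aux hsnn hsumsq D
        (div_pos hεpos (by linarith : (0 : ℝ) < 4 * c))
      set Ssum := ∑ k ∈ Finset.range N, s k with hSsumdef
      have hSsumnn : 0 ≤ Ssum := Finset.sum_nonneg fun k _ => hsnn k
      have hDnn : 0 ≤ D := norm_nonneg _
      -- tail subgradient with tiny error
      set η := ε / (2 * (D + Ssum + 1)) with hηdef
      have hηpos : 0 < η := by
        apply div_pos hεpos; linarith [hDnn, hSsumnn]
      obtain ⟨w', hw', hw'n⟩ := cp_exists_subgrad_norm_lt hηpos (hslope_g N)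
      -- distance bound
      have hxd1 : ∀ j : ℕ, ‖x (j + 1) - x 1‖ ≤ ∑ k ∈ Finset.range j, s (k + 1) := by
        intro j
        induction j with
        | zero => simp
        | succ n ih =>
          rw [Finset.sum_range_succ]
          have ht := norm_sub_le_norm_sub_add_norm_sub (x (n + 1 + 1)) (x (n + 1)) (x 1)
          have he : ‖x (n + 1 + 1) - x (n + 1)‖ = s (n + 1) := (hs (n + 1)).symm
          rw [he] at ht
          linarith
      have hxdist : ‖x (N + 1) - ys‖ ≤ D + Ssum := by
        have ht := norm_sub_le_norm_sub_add_norm_sub (x (N + 1)) (x 1) ys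
        have h1 := hxd1 N
        have h2 : ∑ k ∈ Finset.range N, s (k + 1) ≤ ∑ k ∈ Finset.range N, s k :=
          Finset.sum_le_sum fun k _ => hmono k
        rw [hDdef, hSsumdef]
        linarith
      -- tail estimate
      have htail : G (N + 1) ≤ Gy + ‖w'‖ * ‖x (N + 1) - ys‖ := by
        have h1 := hw'.2 ys
        have h3 : G (N + 1) + ⟪w', ys - x (N + 1)⟫ ≤ Gy :=
          cp_real_of_add_le (hGcoe N) hGycoe h1
        have ha := abs_le.mp (abs_real_inner_le_norm w' (ys - x (N + 1)))
        have he : ‖ys - x (N + 1)‖ = ‖x (N + 1) - ys‖ := norm_sub_rev _ _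
        rw [he] at ha
        linarith [ha.1]
      have hw'b : ‖w'‖ * ‖x (N + 1) - ys‖ ≤ (2 * c * s N + η) * (D + Ssum) := by
        exact mul_le_mul (le_of_lt hw'n) hxdist (norm_nonneg _)
          (add_nonneg (mul_nonneg (le_of_lt h2c) (hsnn N)) (le_of_lt hηpos))
      have hprod1 : 2 * c * s N * (D + Ssum) < ε / 2 := by
        have h1 : s N * (D + Ssum) < ε / (4 * c) := hN
        calc 2 * c * s N * (D + Ssum) = 2 * c * (s N * (D + Ssum)) := by ring
          _ < 2 * c * (ε / (4 * c)) := by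
              exact mul_lt_mul_of_pos_left h1 h2c
          _ = ε / 2 := by
              rw [mul_div_assoc']
              rw [div_eq_div_iff (by linarith : (4:ℝ) * c ≠ 0) (by norm_num : (2:ℝ) ≠ 0)]
              ring
      have hprod2 : η * (D + Ssum) ≤ ε / 2 := by
        rw [hηdef, div_mul_eq_mul_div, div_le_iff₀ (by linarith [hDnn, hSsumnn] : (0 : ℝ) < 2 * (D + Ssum + 1))]
        nlinarith [le_of_lt hεpos, hDnn, hSsumnn]
      -- combine everything
      have hfinal := htele N
      have hGyFN := hGyF N
      have hdist2 : (2 * c * s N + η) * (D + Ssum)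
          = 2 * c * s N * (D + Ssum) + η * (D + Ssum) := by ring
      have hεb : ε * (2 + s 0) ≤ ε' := by
        rw [hεdef, div_mul_eq_mul_div, div_le_iff₀ (by linarith [hsnn 0] : (0 : ℝ) < 3 + s 0)]
        nlinarith [hsnn 0, le_of_lt hε']
      have he2 : ε * (2 + s 0) = ε + ε / 2 + ε / 2 + ε * s 0 := by ring
      linarith [htail, hw'b, hprod1, hprod2, hGyFN, hdist2, hfinal, hεb, he2]
    -- produce x 1
    refine ⟨x 1, ?_, ?_⟩
    · have h1 : f (x 1) + ((c * ‖x 1 - x 0‖ ^ 2 : ℝ) : EReal)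
          ≤ f (x 0) + ((c * ‖x 0 - x 0‖ ^ 2 : ℝ) : EReal) := hxmin 0 (x 0)
      have he : (c * ‖x 0 - x 0‖ ^ 2 : ℝ) = 0 := by simp
      rw [he, EReal.coe_zero, add_zero] at h1
      have h3 : F 1 + c * ‖x 1 - x 0‖ ^ 2 ≤ F 0 := cp_real_of_add_le (hFcoe 1) (hFcoe 0) h1
      have h4 := hFlb 1
      rw [hx0] at h3
      linarith [hF0]
    · rw [hG1coe]
      have hle : G 1 ≤ F₀ := by rw [← hF0]; exact main
      exact_mod_cast hle
  -- conclude by lower semicontinuity of g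
  by_contra hlt
  push_neg at hlt
  have hlt' : (F₀ : EReal) < g x₀ := hfx₀ ▸ hlt
  have hev := hlg x₀ (F₀ : EReal) hlt'
  rw [Metric.eventually_nhds_iff] at hev
  obtain ⟨r, hr, hball⟩ := hev
  set c := (F₀ - mf + 1) / r ^ 2 with hcdef
  have hcpos : 0 < c := by
    apply div_pos (by linarith) (by positivity)
  obtain ⟨x₁, hx₁d, hx₁g⟩ := key c hcpos
  have hdist : dist x₁ x₀ < r := by
    rw [dist_eq_norm]
    have h1 : c * r ^ 2 = F₀ - mf + 1 := by
      rw [hcdef]; field_simp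
    by_contra hge
    push_neg at hge
    have h2 : r ^ 2 ≤ ‖x₁ - x₀‖ ^ 2 := by nlinarith
    nlinarith
  exact absurd (lt_of_lt_of_le (hball hdist) hx₁g) (lt_irrefl _)
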